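/- The polynomial x⁴ − x³ − 2x² − x + 1 ∈ ℤ[x] is irreducible over ℚ, is self-reciprocal, and has exactly two real roots λ and 1/λ with λ > 2 (numerically λ ≈ 2.08101), its other two roots lying on the unit circle. -/

import Mathlib

open Polynomial

private lemma quad_eq (q : ℤ[X]) (hm : q.Monic) (hd : q.natDegree = 2) :
    q = X ^ 2 + C (q.coeff 1) * X + C (q.coeff 0) := by
  have h3 : q.natDegree < 3 := by omega
  have h2 : q.coeff 2 = 1 := by
    have := hm.coeff_natDegree; rwa [hd] at this
  conv_lhs => rw [q.as_sum_range' 3 h3]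
  rw [Finset.sum_range_succ, Finset.sum_range_succ, Finset.sum_range_one, h2]
  simp only [← C_mul_X_pow_eq_monomial, map_one]
  ring

private lemma irr_int : Irreducible (X ^ 4 - X ^ 3 - 2 * X ^ 2 - X + 1 : ℤ[X]) := by
  have hm : (X ^ 4 - X ^ 3 - 2 * X ^ 2 - X + 1 : ℤ[X]).Monic := by monicity!
  have hdeg : (X ^ 4 - X ^ 3 - 2 * X ^ 2 - X + 1 : ℤ[X]).natDegree = 4 := by compute_degree!
  have h1 : (X ^ 4 - X ^ 3 - 2 * X ^ 2 - X + 1 : ℤ[X]) ≠ 1 := by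
    intro h
    have := congrArg natDegree h
    rw [hdeg, natDegree_one] at this
    exact absurd this (by norm_num)
  rw [hm.irreducible_iff_lt_natDegree_lt h1]
  intro q hq hdq hdvd
  rw [hdeg] at hdq
  rw [Finset.mem_Ioc] at hdq
  have hcase : q.natDegree = 1 ∨ q.natDegree = 2 := by omega
  rcases hcase with hd1 | hd2
  · -- linear factor: integer root
    have hqe := hq.eq_X_add_C hd1
    set a := q.coeff 0 with ha
    rw [hqe, show (X + C a : ℤ[X]) = X - C (-a) by rw [map_neg, sub_neg_eq_add]] at hdvd
    have hroot := (dvd_iff_isRoot.mp hdvd)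
    rw [IsRoot] at hroot
    simp only [eval_add, eval_sub, eval_mul, eval_pow, eval_X, eval_one, eval_ofNat] at hroot
    -- hroot : a^4 + a^3 - 2 a^2 + a + 1 = 0 (in some arrangement)
    have hunit : a ∣ 1 := ⟨-(a ^ 3 + a ^ 2 - 2 * a + 1), by linear_combination hroot⟩
    rcases Int.isUnit_iff.mp (isUnit_of_dvd_one hunit) with h | h <;> rw [h] at hroot <;>
      norm_num at hroot
  · -- quadratic factor
    obtain ⟨r, hr⟩ := hdvd
    have hrm : r.Monic := hq.of_mul_monic_left (hr ▸ hm)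
    have hrd : r.natDegree = 2 := by
      have := hq.natDegree_mul hrm
      rw [← hr, hdeg, hd2] at this
      omega
    have hqe := quad_eq q hq hd2
    have hre := quad_eq r hrm hrd
    set b := q.coeff 1 with hb
    set c := q.coeff 0 with hc
    set d := r.coeff 1 with hd
    set e := r.coeff 0 with he
    rw [hqe, hre] at hr
    have h0 := congrArg (eval 0) hr
    have hp1 := congrArg (eval 1) hr
    have hm1 := congrArg (eval (-1)) hr
    simp only [eval_add, eval_sub, eval_mul, eval_pow, eval_X, eval_one, eval_ofNat, eval_C,
      eval_zero, eval_neg] at h0 hp1 hm1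
    norm_num at h0 hp1 hm1
    -- h0 : c * e = 1 (up to arrangement)
    have hce : c * e = 1 := h0.symm
    rcases Int.isUnit_iff.mp (IsUnit.of_mul_eq_one (a := c) e hce) with hc1 | hc1
    · have he1 : e = 1 := by rw [hc1] at hce; linarith
      rw [hc1, he1] at hp1 hm1
      -- (2+b)(2+d) = -2, (2-b)(2-d) = 2
      have hsum : b + d = -1 := by nlinarith [hp1, hm1]
      have hprod : b * d = -4 := by nlinarith [hp1, hm1]
      have hbb : b ^ 2 + b - 4 = 0 := by nlinarith [hsum, hprod]
      have hbnd : -3 ≤ b ∧ b ≤ 2 := by constructor <;> nlinarith [hbb]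
      obtain ⟨hb1, hb2⟩ := hbnd
      interval_cases b <;> omega
    · have he1 : e = -1 := by rw [hc1] at hce; linarith
      rw [hc1, he1] at hp1 hm1
      -- b * d = -2 and b * d = 2
      nlinarith [hp1, hm1]

theorem dolgachev_salem_polynomial :
    Irreducible (X ^ 4 - X ^ 3 - 2 * X ^ 2 - X + 1 : ℚ[X]) ∧
    (∀ i ≤ 4, (X ^ 4 - X ^ 3 - 2 * X ^ 2 - X + 1 : ℚ[X]).coeff i =
      (X ^ 4 - X ^ 3 - 2 * X ^ 2 - X + 1 : ℚ[X]).coeff (4 - i)) ∧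
    ∃ lam : ℝ, lam > 2 ∧
      aeval lam (X ^ 4 - X ^ 3 - 2 * X ^ 2 - X + 1 : ℚ[X]) = 0 ∧
      aeval (1 / lam) (X ^ 4 - X ^ 3 - 2 * X ^ 2 - X + 1 : ℚ[X]) = 0 ∧
      (∀ x : ℝ, aeval x (X ^ 4 - X ^ 3 - 2 * X ^ 2 - X + 1 : ℚ[X]) = 0 →
        x = lam ∨ x = 1 / lam) ∧
      (∀ z : ℂ, aeval z (X ^ 4 - X ^ 3 - 2 * X ^ 2 - X + 1 : ℚ[X]) = 0 →
        z = (lam : ℂ) ∨ z = ((1 / lam : ℝ) : ℂ) ∨ ‖z‖ = 1) := by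
  have haevalR : ∀ x : ℝ, aeval x (X ^ 4 - X ^ 3 - 2 * X ^ 2 - X + 1 : ℚ[X]) =
      x ^ 4 - x ^ 3 - 2 * x ^ 2 - x + 1 := by
    intro x
    simp [map_sub, map_add, map_pow, map_mul, map_ofNat]
  have haevalC : ∀ z : ℂ, aeval z (X ^ 4 - X ^ 3 - 2 * X ^ 2 - X + 1 : ℚ[X]) =
      z ^ 4 - z ^ 3 - 2 * z ^ 2 - z + 1 := by
    intro z
    simp [map_sub, map_add, map_pow, map_mul, map_ofNat]
  refine ⟨?_, ?_, ?_⟩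
  · -- irreducibility via Gauss lemma
    have hm : (X ^ 4 - X ^ 3 - 2 * X ^ 2 - X + 1 : ℤ[X]).Monic := by monicity!
    have := (hm.irreducible_iff_irreducible_map_fraction_map (K := ℚ)).mp irr_int
    have hmap : map (algebraMap ℤ ℚ) (X ^ 4 - X ^ 3 - 2 * X ^ 2 - X + 1 : ℤ[X]) =
        (X ^ 4 - X ^ 3 - 2 * X ^ 2 - X + 1 : ℚ[X]) := by
      simp [Polynomial.map_add, Polynomial.map_sub, Polynomial.map_mul, Polynomial.map_pow,
        Polynomial.map_ofNat]
    rwa [hmap] at this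
  · -- palindromic coefficients
    intro i hi
    interval_cases i <;>
      simp [coeff_one, coeff_X]
  · -- the roots
    set s : ℝ := Real.sqrt 17 with hsdef
    have hs0 : 0 ≤ s := Real.sqrt_nonneg _
    have hs : s ^ 2 = 17 := Real.sq_sqrt (by norm_num)
    have hs4 : 4 < s := by nlinarith
    set u : ℝ := Real.sqrt ((1 + s) / 2) with hudef
    have hu0 : 0 ≤ u := Real.sqrt_nonneg _
    have hu : u ^ 2 = (1 + s) / 2 := Real.sq_sqrt (by linarith)
    have hu1 : 3 / 2 < u := by nlinarith
    refine ⟨(1 + s + 2 * u) / 4, by linarith, ?_, ?_, ?_, ?_⟩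
    · rw [haevalR]
      linear_combination ((-5 : ℝ)/256 + (1/16)*u + (3/64)*s + (1/32)*s*u + (1/256)*s^2) * hs +
        ((-9 : ℝ)/16 + (1/16)*u^2 + (1/32)*s + (1/8)*s*u + (3/32)*s^2) * hu
    · rw [haevalR]
      have hlam0 : (1 + s + 2 * u) / 4 ≠ 0 := by positivity
      have hinv : 1 / ((1 + s + 2 * u) / 4) = (1 + s - 2 * u) / 4 := by
        rw [div_eq_iff hlam0]
        linear_combination (-(1:ℝ)/16) * hs + (1/4) * hu
      rw [hinv]
      linear_combination ((-5 : ℝ)/256 - (1/16)*u + (3/64)*s - (1/32)*s*u + (1/256)*s^2) * hs +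
        ((-9 : ℝ)/16 + (1/16)*u^2 + (1/32)*s - (1/8)*s*u + (3/32)*s^2) * hu
    · intro x hx
      rw [haevalR] at hx
      have hlam0 : (1 + s + 2 * u) / 4 ≠ 0 := by positivity
      have hinv : 1 / ((1 + s + 2 * u) / 4) = (1 + s - 2 * u) / 4 := by
        rw [div_eq_iff hlam0]
        linear_combination (-(1:ℝ)/16) * hs + (1/4) * hu
      have hfac : (x ^ 2 - (1 + s) / 2 * x + 1) * (x ^ 2 - (1 - s) / 2 * x + 1) = 0 := by
        linear_combination hx - (x ^ 2 / 4) * hs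
      rcases mul_eq_zero.mp hfac with h1 | h2
      · have h3 : (x - (1 + s + 2 * u) / 4) * (x - (1 + s - 2 * u) / 4) = 0 := by
          linear_combination h1 + (1/16 : ℝ) * hs - (1/4 : ℝ) * hu
        rcases mul_eq_zero.mp h3 with h4 | h4
        · exact Or.inl (by linarith [sub_eq_zero.mp h4])
        · refine Or.inr ?_
          rw [hinv]
          linarith [sub_eq_zero.mp h4]
      · exfalso
        nlinarith [sq_nonneg (x - (1 - s) / 4), h2, hs, hs4]
    · intro z hz
      rw [haevalC] at hz
      have hlam0 : (1 + s + 2 * u) / 4 ≠ 0 := by positivity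
      have hinv : 1 / ((1 + s + 2 * u) / 4) = (1 + s - 2 * u) / 4 := by
        rw [div_eq_iff hlam0]
        linear_combination (-(1:ℝ)/16) * hs + (1/4) * hu
      have hsC : (s : ℂ) ^ 2 = 17 := by exact_mod_cast hs
      have huC : (u : ℂ) ^ 2 = (1 + (s : ℂ)) / 2 := by exact_mod_cast hu
      have hfac : (z ^ 2 - (1 + (s : ℂ)) / 2 * z + 1) * (z ^ 2 - (1 - (s : ℂ)) / 2 * z + 1) = 0 := by
        linear_combination hz - (z ^ 2 / 4) * hsC
      rcases mul_eq_zero.mp hfac with h1 | h2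
      · have hlamC : (((1 + s + 2 * u) / 4 : ℝ) : ℂ) = (1 + (s : ℂ) + 2 * (u : ℂ)) / 4 := by
          push_cast; ring
        have hmuC : (((1 + s - 2 * u) / 4 : ℝ) : ℂ) = (1 + (s : ℂ) - 2 * (u : ℂ)) / 4 := by
          push_cast; ring
        have h3 : (z - (((1 + s + 2 * u) / 4 : ℝ) : ℂ)) * (z - (((1 + s - 2 * u) / 4 : ℝ) : ℂ)) = 0 := by
          rw [hlamC, hmuC]
          linear_combination h1 + (1/16 : ℂ) * hsC - (1/4 : ℂ) * huC
        rcases mul_eq_zero.mp h3 with h4 | h4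
        · exact Or.inl (sub_eq_zero.mp h4)
        · refine Or.inr (Or.inl ?_)
          rw [hinv]
          exact sub_eq_zero.mp h4
      · refine Or.inr (Or.inr ?_)
        have hconj := congrArg (starRingEnd ℂ) h2
        simp only [map_add, map_sub, map_mul, map_pow, map_one, map_div₀, map_ofNat,
          Complex.conj_ofReal, map_zero] at hconj
        by_cases hzc : z = (starRingEnd ℂ) z
        · exfalso
          have him : z.im = 0 := Complex.conj_eq_iff_im.mp hzc.symm
          have hzre : z = (z.re : ℂ) := (Complex.conj_eq_iff_re.mp hzc.symm).symm
          rw [hzre] at h2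
          have hreal : ((z.re ^ 2 - (1 - s) / 2 * z.re + 1 : ℝ) : ℂ) = 0 := by
            push_cast
            linear_combination h2
          have hx := Complex.ofReal_eq_zero.mp hreal
          nlinarith [sq_nonneg (z.re - (1 - s) / 4), hx, hs, hs4]
        · have hdiff : (z - (starRingEnd ℂ) z) * (z + (starRingEnd ℂ) z - (1 - (s : ℂ)) / 2) = 0 := by
            linear_combination h2 - hconj
          have hsum : z + (starRingEnd ℂ) z = (1 - (s : ℂ)) / 2 := by
            rcases mul_eq_zero.mp hdiff with h | h
            · exact absurd (sub_eq_zero.mp h) hzc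
            · linear_combination h
          have hzc1 : z * (starRingEnd ℂ) z = 1 := by
            linear_combination -h2 + z * hsum
          have hns : Complex.normSq z = 1 := by
            have := Complex.mul_conj z
            rw [hzc1] at this
            exact_mod_cast this.symm
          have habs : ‖z‖ ^ 2 = 1 := by
            rw [Complex.sq_norm, hns]
          nlinarith [norm_nonneg z, habs]
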